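/- Let h₁, …, hₙ > 0, b > 0, ρ ∈ ℝ, and let S = (s_{ji}), W = (w_{ji}) be n×n matrices with w_{jj} = 0. Define the matrix J with entries J_{jj} = 1/√(h_j) and J_{ij} = -(b y_j / (2 y_i h_j^{3/2})) ρ s_{ji} w_{ji} for i ≠ j, where y₁, …, yₙ ≠ 0. Then ln|det J| = ln|det( diag(2h₁/b, …, 2hₙ/b) - ρ (Sᵀ ∘ Wᵀ) )| + ∑_{i=1}^n ln( b / (2 h_i^{3/2}) ), where ∘ denotes the Hadamard (entrywise) product, provided both determinants are nonzero. -/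

import Mathlib

open Matrix

theorem stmt9 {n : ℕ} (h y : Fin n → ℝ) (ρ b : ℝ)
    (S W : Matrix (Fin n) (Fin n) ℝ)
    (hh : ∀ i, 0 < h i) (hb : 0 < b) (hy : ∀ i, y i ≠ 0)
    (hWdiag : ∀ j, W j j = 0)
    (J : Matrix (Fin n) (Fin n) ℝ)
    (hJ : J = Matrix.of fun i j =>
      if i = j then 1 / Real.sqrt (h j)
      else -(b * y j / (2 * y i * (h j) ^ ((3 : ℝ) / 2))) * ρ * S j i * W j i)
    (hJdet : J.det ≠ 0)
    (hMdet :
      (Matrix.diagonal (fun i => 2 * h i / b) - ρ • Matrix.hadamard Sᵀ Wᵀ).det ≠ 0) :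
    Real.log |J.det| =
      Real.log
          |(Matrix.diagonal (fun i => 2 * h i / b) - ρ • Matrix.hadamard Sᵀ Wᵀ).det| +
        ∑ i, Real.log (b / (2 * (h i) ^ ((3 : ℝ) / 2))) := by
  set M := Matrix.diagonal (fun i => 2 * h i / b) - ρ • Matrix.hadamard Sᵀ Wᵀ with hM
  have hrpow : ∀ i, (h i) ^ ((3 : ℝ) / 2) = h i * Real.sqrt (h i) := by
    intro i
    rw [Real.sqrt_eq_rpow]
    rw [show (3 : ℝ) / 2 = 1 + 1 / 2 by norm_num,
      Real.rpow_add (hh i), Real.rpow_one]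
  have hrpos : ∀ i, (0:ℝ) < (h i) ^ ((3 : ℝ) / 2) := fun i =>
    Real.rpow_pos_of_pos (hh i) _
  have hsqrt : ∀ i, (0:ℝ) < Real.sqrt (h i) := fun i => Real.sqrt_pos.2 (hh i)
  have key : J = Matrix.diagonal (fun i => (y i)⁻¹) * M *
      Matrix.diagonal (fun j => y j * (b / (2 * (h j) ^ ((3 : ℝ) / 2)))) := by
    subst hJ
    ext i j
    rw [Matrix.mul_diagonal, Matrix.diagonal_mul, Matrix.of_apply]
    by_cases hij : i = j
    · subst hij
      simp only [if_pos rfl, hM, Matrix.sub_apply, Matrix.diagonal_apply_eq,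
        Matrix.smul_apply, Matrix.hadamard_apply, Matrix.transpose_apply,
        hWdiag i, mul_zero, smul_zero, sub_zero, hrpow i]
      field_simp
      rw [if_pos trivial, div_eq_div_iff (hsqrt i).ne'
        (mul_ne_zero (mul_ne_zero (hsqrt i).ne' (hy i)) (hh i).ne')]
      ring
    · simp only [if_neg hij, hM, Matrix.sub_apply,
        Matrix.diagonal_apply_ne _ hij, Matrix.smul_apply,
        Matrix.hadamard_apply, Matrix.transpose_apply, zero_sub, smul_eq_mul]
      field_simp
  have hdet : J.det = M.det * ∏ i, (b / (2 * (h i) ^ ((3 : ℝ) / 2))) := by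
    rw [key, Matrix.det_mul, Matrix.det_mul, Matrix.det_diagonal, Matrix.det_diagonal,
      mul_right_comm, mul_comm]
    congr 1
    rw [← Finset.prod_mul_distrib]
    exact Finset.prod_congr rfl fun i _ => inv_mul_cancel_left₀ (hy i) _
  have hprodpos : ∀ i ∈ Finset.univ, (0:ℝ) < b / (2 * (h i) ^ ((3 : ℝ) / 2)) := by
    intro i _
    exact div_pos hb (mul_pos two_pos (hrpos i))
  rw [hdet, abs_mul, abs_of_pos (Finset.prod_pos hprodpos),
    Real.log_mul (abs_ne_zero.2 hMdet) (ne_of_gt (Finset.prod_pos hprodpos)),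
    Real.log_prod]
  intro i _
  exact ne_of_gt (hprodpos i (Finset.mem_univ i))
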